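/- arXiv:1605.05432 — 2 statements merged into one kernel-verified Lean document; each statement's English description precedes it below -/
import Mathlib

section
/- Let C(G) be the full cone over a finite graph G with cone point p, and let f be a function on C(G) with f(p) = 0. Then Γ₁ᶜ(f, Δᶜf)(p) = (1/2) Σ_{y ∈ V} f(y)Δf(y) - (1/2) Σ_{y ∈ V} f(y)² - (1/2) (Σ_{y ∈ V} f(y))². -/
open Finset

variable {V : Type*}

noncomputable def lap (G : SimpleGraph V) [∀ v, Fintype (G.neighborSet v)] (f : V → ℝ) (x : V) : ℝ :=
  ∑ y ∈ G.neighborFinset x, (f y - f x)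

noncomputable def gam (G : SimpleGraph V) [∀ v, Fintype (G.neighborSet v)] (f g : V → ℝ) (x : V) : ℝ :=
  (1/2) * ∑ y ∈ G.neighborFinset x, (f y - f x) * (g y - g x)

noncomputable def gam1 (G : SimpleGraph V) [∀ v, Fintype (G.neighborSet v)] (f : V → ℝ) (x : V) : ℝ :=
  (1/2) * ∑ y ∈ G.neighborFinset x, (f y - f x)^2

noncomputable def gam2 (G : SimpleGraph V) [∀ v, Fintype (G.neighborSet v)] (f : V → ℝ) (x : V) : ℝ :=
  (1/2) * (lap G (gam1 G f) x - 2 * gam G f (lap G f) x)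

def cone (G : SimpleGraph V) : SimpleGraph (Option V) where
  Adj a b := a ≠ b ∧ ∀ x ∈ a, ∀ y ∈ b, G.Adj x y
  symm := ⟨fun _ _ h => ⟨h.1.symm, fun x hx y hy => (h.2 y hy x hx).symm⟩⟩
  loopless := ⟨fun _ h => h.1 rfl⟩

instance (G : SimpleGraph V) [DecidableEq V] [DecidableRel G.Adj] :
    DecidableRel (cone G).Adj := fun a b =>
  inferInstanceAs (Decidable (a ≠ b ∧ ∀ x ∈ a, ∀ y ∈ b, G.Adj x y))



lemma cone_nf_none (G : SimpleGraph V) [Fintype V] [DecidableEq V] [DecidableRel G.Adj] :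
    (cone G).neighborFinset none = Finset.univ.map Function.Embedding.some := by
  ext a
  simp only [SimpleGraph.mem_neighborFinset, Finset.mem_map, Finset.mem_univ, true_and]
  constructor
  · rintro ⟨h1, -⟩
    cases a with
    | none => exact absurd rfl h1
    | some y => exact ⟨y, rfl⟩
  · rintro ⟨y, rfl⟩
    exact ⟨by simp [cone], by simp⟩

lemma cone_nf_some (G : SimpleGraph V) [Fintype V] [DecidableEq V] [DecidableRel G.Adj]
    (y : V) :
    (cone G).neighborFinset (some y)
      = insert none ((G.neighborFinset y).map Function.Embedding.some) := by
  ext a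
  simp only [SimpleGraph.mem_neighborFinset, Finset.mem_insert, Finset.mem_map]
  constructor
  · rintro ⟨h1, h2⟩
    cases a with
    | none => exact Or.inl rfl
    | some z => exact Or.inr ⟨z, h2 y rfl z rfl, rfl⟩
  · rintro (rfl | ⟨z, hz, rfl⟩)
    · exact ⟨by simp [cone], fun x hx b hb => by simp at hb⟩
    · refine ⟨by simp [hz.ne], fun x hx b hb => ?_⟩
      simp only [Option.mem_def, Option.some.injEq, Function.Embedding.some_apply] at hx hb
      subst hx; subst hb; exact hz

lemma lap_cone_some (G : SimpleGraph V) [Fintype V] [DecidableEq V] [DecidableRel G.Adj]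
    (f : Option V → ℝ) (hf : f none = 0) (y : V) :
    lap (cone G) f (some y) = lap G (fun z => f (some z)) y - f (some y) := by
  rw [lap, cone_nf_some, Finset.sum_insert (by simp), Finset.sum_map]
  simp [lap, hf]
  ring

theorem stmt4 (G : SimpleGraph V) [Fintype V] [DecidableEq V] [DecidableRel G.Adj]
    (f : Option V → ℝ) (hf : f none = 0) :
    gam (cone G) f (lap (cone G) f) none
      = (1/2) * ∑ y : V, f (some y) * lap G (fun z => f (some z)) y
        - (1/2) * ∑ y : V, (f (some y))^2
        - (1/2) * (∑ y : V, f (some y))^2 := by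
  have hL : lap (cone G) f none = ∑ y : V, f (some y) := by
    rw [lap, cone_nf_none, Finset.sum_map]
    simp [hf]
  rw [gam, cone_nf_none, Finset.sum_map]
  simp only [Function.Embedding.some_apply, hf, sub_zero, hL]
  rw [Finset.sum_congr rfl (fun y _ => by rw [lap_cone_some G f hf y])]
  simp only [mul_sub, Finset.sum_sub_distrib]
  rw [← Finset.sum_mul]
  simp only [← pow_two]
end

section
/- Suppose a finite graph G satisfies the conical curvature-dimension condition CCD(K, N), meaning Γ₂ᶜ(f)(p) ≥ (Δᶜf)²(p)/N + K Γ₁ᶜ(f)(p) for all functions f on the cone C(G). Then for every function f on G: Σ_{y ∈ V} Γ₁(f)(y) ≥ ((2 - N)/(2N)) (Σ_{y ∈ V} f(y))² + ((2K + |V| - 3)/4) Σ_{y ∈ V} f(y)². -/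
open Finset

variable {V : Type*}

lemma cone_nbr_none (G : SimpleGraph V) [Fintype V] [DecidableEq V] [DecidableRel G.Adj] :
    (cone G).neighborFinset none = Finset.univ.image some := by
  ext y
  cases y with
  | none => simp only [SimpleGraph.mem_neighborFinset]; simp [cone]
  | some y => simp only [SimpleGraph.mem_neighborFinset]; simp [cone]

lemma cone_nbr_some (G : SimpleGraph V) [Fintype V] [DecidableEq V] [DecidableRel G.Adj] (x : V) :
    (cone G).neighborFinset (some x) = insert none ((G.neighborFinset x).image some) := by
  ext y
  cases y with
  | none => simp only [SimpleGraph.mem_neighborFinset]; simp [cone]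
  | some y =>
    simp only [SimpleGraph.mem_neighborFinset, Finset.mem_insert, Finset.mem_image]; simp only [cone]
    constructor
    · rintro ⟨-, h⟩
      exact Or.inr ⟨y, by simpa using h x rfl y rfl, rfl⟩
    · rintro (h | ⟨z, hz, hzy⟩)
      · exact absurd h (by simp)
      · obtain rfl : z = y := Option.some_injective V hzy
        exact ⟨by simpa using hz.ne, by simpa using hz⟩

lemma swap_sum (G : SimpleGraph V) [Fintype V] [DecidableRel G.Adj] (g : V → V → ℝ) :
    ∑ x : V, ∑ y ∈ G.neighborFinset x, g x y = ∑ x : V, ∑ y ∈ G.neighborFinset x, g y x := by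
  have h : ∀ (g : V → V → ℝ), (∑ x : V, ∑ y ∈ G.neighborFinset x, g x y)
      = ∑ x : V, ∑ y : V, if G.Adj x y then g x y else 0 := by
    intro g
    refine Finset.sum_congr rfl fun x _ => ?_
    rw [SimpleGraph.neighborFinset_eq_filter, Finset.sum_filter]
  rw [h, h, Finset.sum_comm]
  refine Finset.sum_congr rfl fun x _ => Finset.sum_congr rfl fun y _ => ?_
  exact if_congr (G.adj_comm y x) rfl rfl

lemma sum_f_lap (G : SimpleGraph V) [Fintype V] [DecidableRel G.Adj] (f : V → ℝ) :
    ∑ x : V, f x * lap G f x = - ∑ x : V, gam1 G f x := by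
  have h := swap_sum G (fun x y => (f y)^2 - (f x)^2)
  have hzero : ∑ x : V, ∑ y ∈ G.neighborFinset x, (((f y)^2 - (f x)^2) + ((f x)^2 - (f y)^2)) = 0 := by
    simp
  simp only [Finset.sum_add_distrib] at hzero
  have hz2 : ∑ x : V, ∑ y ∈ G.neighborFinset x, ((f y)^2 - (f x)^2) = 0 := by linarith
  have key : ∀ x : V, f x * lap G f x
      = (1/2) * (∑ y ∈ G.neighborFinset x, ((f y)^2 - (f x)^2)) - gam1 G f x := by
    intro x
    rw [lap, gam1, Finset.mul_sum, Finset.mul_sum, Finset.mul_sum, ← Finset.sum_sub_distrib]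
    exact Finset.sum_congr rfl fun y _ => by ring
  rw [Finset.sum_congr rfl fun x _ => key x, Finset.sum_sub_distrib, ← Finset.mul_sum, hz2]
  ring


theorem stmt9 (G : SimpleGraph V) [Fintype V] [DecidableEq V] [DecidableRel G.Adj]
    (hG : G.Connected) (K N : ℝ) (hN : 1 < N)
    (hCCD : ∀ f : Option V → ℝ,
      gam2 (cone G) f none ≥ (lap (cone G) f none)^2 / N + K * gam1 (cone G) f none) :
    ∀ f : V → ℝ,
      ∑ y : V, gam1 G f y
        ≥ (2 - N) / (2 * N) * (∑ y : V, f y)^2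
          + (2 * K + (Fintype.card V : ℝ) - 3) / 4 * ∑ y : V, (f y)^2 := by
  intro f
  set F : Option V → ℝ := fun o => Option.casesOn o 0 f with hF
  have hFn : F none = 0 := rfl
  have hFs : ∀ x : V, F (some x) = f x := fun _ => rfl
  set S : ℝ := ∑ y : V, f y with hS
  set Q : ℝ := ∑ y : V, (f y)^2 with hQ
  set T : ℝ := ∑ y : V, gam1 G f y with hT
  have hinj : ∀ x ∈ (Finset.univ : Finset V), ∀ y ∈ (Finset.univ : Finset V),
      some x = some y → x = y := fun x _ y _ h => Option.some_injective V h
  have hinj2 : ∀ (x : V), ∀ x_1 ∈ G.neighborFinset x, ∀ y ∈ G.neighborFinset x,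
      some x_1 = some y → x_1 = y := fun _ x _ y _ h => Option.some_injective V h
  -- lap of F at apex
  have hlapF : lap (cone G) F none = S := by
    rw [lap, cone_nbr_none, Finset.sum_image hinj]
    simp [hFn, hFs, hS]
  -- gam1 of F at apex
  have hgam1F : gam1 (cone G) F none = (1/2) * Q := by
    rw [gam1, cone_nbr_none, Finset.sum_image hinj]
    simp [hFn, hFs, hQ]
  -- gam1 of F at other points
  have hgam1Fs : ∀ x : V, gam1 (cone G) F (some x) = gam1 G f x + (1/2) * (f x)^2 := by
    intro x
    rw [gam1, cone_nbr_some, Finset.sum_insert (by simp), Finset.sum_image (hinj2 x), gam1]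
    simp only [hFn, hFs]
    ring
  -- lap of F at other points
  have hlapFs : ∀ x : V, lap (cone G) F (some x) = lap G f x - f x := by
    intro x
    rw [lap, cone_nbr_some, Finset.sum_insert (by simp), Finset.sum_image (hinj2 x), lap]
    simp only [hFn, hFs]
    ring
  -- the two pieces of gam2 at the apex
  have hA : lap (cone G) (gam1 (cone G) F) none
      = T + (1/2) * Q - (Fintype.card V : ℝ) / 2 * Q := by
    rw [lap, cone_nbr_none, Finset.sum_image hinj]
    have : ∀ x ∈ (Finset.univ : Finset V),
        gam1 (cone G) F (some x) - gam1 (cone G) F none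
          = (gam1 G f x + (1/2) * (f x)^2) - (1/2) * Q := by
      intro x _; rw [hgam1Fs, hgam1F]
    rw [Finset.sum_congr rfl this, Finset.sum_sub_distrib, Finset.sum_add_distrib,
      ← Finset.mul_sum, Finset.sum_const, Finset.card_univ, nsmul_eq_mul, ← hQ, ← hT]
    ring
  have hB : gam (cone G) F (lap (cone G) F) none = (1/2) * (-T - Q - S * S) := by
    rw [gam, cone_nbr_none, Finset.sum_image hinj]
    have : ∀ x ∈ (Finset.univ : Finset V),
        (F (some x) - F none) * (lap (cone G) F (some x) - lap (cone G) F none)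
          = f x * lap G f x - (f x)^2 - S * f x := by
      intro x _; rw [hlapFs, hlapF, hFs, hFn]; ring
    rw [Finset.sum_congr rfl this, Finset.sum_sub_distrib, Finset.sum_sub_distrib,
      ← Finset.mul_sum, sum_f_lap, ← hQ, ← hS, ← hT]
  have hgam2 : gam2 (cone G) F none
      = T + (3 - (Fintype.card V : ℝ)) / 4 * Q + (1/2) * S^2 := by
    rw [gam2, hA, hB]; ring
  have h := hCCD F
  rw [hgam2, hlapF, hgam1F] at h
  have hN0 : N ≠ 0 := by linarith
  have hdiv : (2 - N) / (2 * N) * S^2 = S^2 / N - (1/2) * S^2 := by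
    field_simp
  rw [ge_iff_le, hdiv]
  linarith
end
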